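/- Let k be a field. Then M_∞(k), the ring of ℕ×ℕ matrices over k with only finitely many nonzero entries, is the only proper nonzero two-sided ideal of Karoubi's cone Γ(k). -/

import Mathlib

open scoped BigOperators

/-- `N(A) < ∞`: there is a common finite bound on the number of nonzero entries
of every row and of every column of the `ℕ×ℕ` matrix `A`. -/
def NFin {R : Type*} [Ring R] (A : ℕ → ℕ → R) : Prop :=
  ∃ N : ℕ,
    (∀ i, {j | A i j ≠ 0}.Finite ∧ {j | A i j ≠ 0}.ncard ≤ N) ∧
    (∀ j, {i | A i j ≠ 0}.Finite ∧ {i | A i j ≠ 0}.ncard ≤ N)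

/-- Membership in Karoubi's cone `Γ(R)`: `N(A) < ∞` and the set of entries of
`A` is finite. -/
def InGamma {R : Type*} [Ring R] (A : ℕ → ℕ → R) : Prop :=
  NFin A ∧ (Set.range fun p : ℕ × ℕ => A p.1 p.2).Finite

/-- The (locally finite) product `P * A * Q` of `ℕ×ℕ` matrices, defined
entrywise by finite sums. -/
noncomputable def mul3 {R : Type*} [Ring R] (P A Q : ℕ → ℕ → R) : ℕ → ℕ → R :=
  fun i j => ∑ᶠ (k : ℕ), ∑ᶠ (l : ℕ), P i k * A k l * Q l j

/-- `B ∈ Γ(R) A Γ(R)`: `B` is a finite sum of products `P A Q` with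
`P, Q ∈ Γ(R)`. -/
def InGAG {R : Type*} [Ring R] (A B : ℕ → ℕ → R) : Prop :=
  ∃ (n : ℕ) (P Q : Fin n → (ℕ → ℕ → R)),
    (∀ t, InGamma (P t) ∧ InGamma (Q t)) ∧ B = ∑ t, mul3 (P t) A (Q t)

/-- The (locally finite) matrix product. -/
noncomputable def gmul {R : Type*} [Ring R] (A B : ℕ → ℕ → R) : ℕ → ℕ → R :=
  fun i j => ∑ᶠ (l : ℕ), A i l * B l j

/-- Karoubi's cone, as a set of matrices. -/
def GammaSet (R : Type*) [Ring R] : Set (ℕ → ℕ → R) := {A | InGamma A}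

/-- `M_∞(R)`: matrices with finitely many nonzero entries. -/
def MinfSet (R : Type*) [Ring R] : Set (ℕ → ℕ → R) :=
  {A | {p : ℕ × ℕ | A p.1 p.2 ≠ 0}.Finite}

/-- A two-sided ideal of `Γ(R)`, as a subset of matrices. -/
def IsTwoSidedIdealOfGamma (R : Type*) [Ring R] (I : Set (ℕ → ℕ → R)) : Prop :=
  I ⊆ GammaSet R ∧ (0 : ℕ → ℕ → R) ∈ I ∧
  (∀ A B, A ∈ I → B ∈ I → A + B ∈ I) ∧
  (∀ A ∈ I, -A ∈ I) ∧
  (∀ A B, A ∈ GammaSet R → B ∈ I → gmul A B ∈ I ∧ gmul B A ∈ I)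

set_option maxHeartbeats 1000000
namespace S9
variable {k : Type*} [Field k]

def Esc (c : k) (p q : ℕ) : ℕ → ℕ → k := fun i j => if i = p ∧ j = q then c else 0

lemma ncard_le_one {α : Type*} {s : Set α} (h : s.Subsingleton) : s.ncard ≤ 1 := by
  rcases h.eq_empty_or_singleton with h|⟨a,h⟩ <;> simp [h]

lemma inGamma_of_subsingleton (A : ℕ → ℕ → k)
    (hr : ∀ i, ({j | A i j ≠ 0}).Subsingleton)
    (hc : ∀ j, ({i | A i j ≠ 0}).Subsingleton)
    (he : (Set.range fun p : ℕ × ℕ => A p.1 p.2).Finite) : InGamma A :=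
  ⟨⟨1, fun i => ⟨(hr i).finite, ncard_le_one (hr i)⟩,
       fun j => ⟨(hc j).finite, ncard_le_one (hc j)⟩⟩, he⟩

lemma range_entries_subset (A : ℕ → ℕ → k) (s : Set k)
    (h : ∀ i j, A i j ∈ s) : (Set.range fun p : ℕ × ℕ => A p.1 p.2) ⊆ s := by
  rintro x ⟨p, rfl⟩; exact h p.1 p.2

lemma inGamma_Esc (c : k) (p q : ℕ) : InGamma (Esc c p q) := by
  refine inGamma_of_subsingleton _ (fun i => ?_) (fun j => ?_) ?_
  · intro a ha b hb
    simp only [Esc, Set.mem_setOf_eq, ne_eq, ite_eq_right_iff, Classical.not_imp] at ha hb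
    exact ha.1.2.trans hb.1.2.symm
  · intro a ha b hb
    simp only [Esc, Set.mem_setOf_eq, ne_eq, ite_eq_right_iff, Classical.not_imp] at ha hb
    exact ha.1.1.trans hb.1.1.symm
  · refine Set.Finite.subset ((Set.finite_singleton (0:k)).insert c)
      (range_entries_subset _ _ ?_)
    intro i j; simp only [Esc]; split
    · exact Set.mem_insert _ _
    · exact Set.mem_insert_iff.2 (Or.inr rfl)

lemma inGamma_sel_left (σ : ℕ → ℕ) (hσ : Function.Injective σ) :
    InGamma (fun n m => if m = σ n then (1:k) else 0) := by
  refine inGamma_of_subsingleton _ (fun i => ?_) (fun j => ?_) ?_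
  · intro a ha b hb
    simp only [Set.mem_setOf_eq, ne_eq, ite_eq_right_iff, Classical.not_imp] at ha hb
    exact ha.1.trans hb.1.symm
  · intro a ha b hb
    simp only [Set.mem_setOf_eq, ne_eq, ite_eq_right_iff, Classical.not_imp] at ha hb
    exact hσ (ha.1.symm.trans hb.1)
  · refine Set.Finite.subset ((Set.finite_singleton (0:k)).insert 1)
      (range_entries_subset (fun n m => if m = σ n then (1:k) else 0) _ ?_)
    intro i j; beta_reduce; split
    · exact Set.mem_insert _ _
    · exact Set.mem_insert_iff.2 (Or.inr rfl)

lemma inGamma_sel_right (τ : ℕ → ℕ) (hτ : Function.Injective τ) :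
    InGamma (fun m n => if m = τ n then (1:k) else 0) := by
  refine inGamma_of_subsingleton _ (fun i => ?_) (fun j => ?_) ?_
  · intro a ha b hb
    simp only [Set.mem_setOf_eq, ne_eq, ite_eq_right_iff, Classical.not_imp] at ha hb
    exact hτ (ha.1.symm.trans hb.1)
  · intro a ha b hb
    simp only [Set.mem_setOf_eq, ne_eq, ite_eq_right_iff, Classical.not_imp] at ha hb
    exact ha.1.trans hb.1.symm
  · refine Set.Finite.subset ((Set.finite_singleton (0:k)).insert 1)
      (range_entries_subset (fun m n => if m = τ n then (1:k) else 0) _ ?_)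
    intro i j; beta_reduce; split
    · exact Set.mem_insert _ _
    · exact Set.mem_insert_iff.2 (Or.inr rfl)

lemma inGamma_diag (d : ℕ → k) (hd : (Set.range d).Finite) :
    InGamma (fun i j => if i = j then d i else 0) := by
  refine inGamma_of_subsingleton _ (fun i => ?_) (fun j => ?_) ?_
  · intro a ha b hb
    simp only [Set.mem_setOf_eq, ne_eq, ite_eq_right_iff, Classical.not_imp] at ha hb
    exact ha.1.symm.trans hb.1
  · intro a ha b hb
    simp only [Set.mem_setOf_eq, ne_eq, ite_eq_right_iff, Classical.not_imp] at ha hb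
    exact ha.1.trans hb.1.symm
  · refine Set.Finite.subset (hd.insert 0) (range_entries_subset (fun i j => if i = j then d i else 0) _ ?_)
    intro i j; beta_reduce; split
    · exact Set.mem_insert_iff.2 (Or.inr ⟨i, rfl⟩)
    · exact Set.mem_insert _ _


lemma gmul_sel_left (σ : ℕ → ℕ) (A : ℕ → ℕ → k) :
    gmul (fun n m => if m = σ n then (1:k) else 0) A = fun n j => A (σ n) j := by
  funext n j
  show (∑ᶠ l, (if l = σ n then (1:k) else 0) * A l j) = A (σ n) j
  rw [finsum_eq_single _ (σ n) (fun x hx => by simp [hx])]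
  simp

lemma gmul_sel_right (τ : ℕ → ℕ) (A : ℕ → ℕ → k) :
    gmul A (fun m n => if m = τ n then (1:k) else 0) = fun i n => A i (τ n) := by
  funext i n
  show (∑ᶠ l, A i l * (if l = τ n then (1:k) else 0)) = A i (τ n)
  rw [finsum_eq_single _ (τ n) (fun x hx => by simp [hx])]
  simp

lemma gmul_one_right (A : ℕ → ℕ → k) :
    gmul A (fun i j => if i = j then (1:k) else 0) = A := by
  funext i j
  show (∑ᶠ l, A i l * (if l = j then (1:k) else 0)) = A i j
  rw [finsum_eq_single _ j (fun x hx => by simp [hx])]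
  simp

lemma gmul_diag_left (d : ℕ → k) (A : ℕ → ℕ → k) :
    gmul (fun i j => if i = j then d i else 0) A = fun i j => d i * A i j := by
  funext i j
  show (∑ᶠ l, (if i = l then d i else 0) * A l j) = d i * A i j
  rw [finsum_eq_single _ i (fun x hx => by simp [Ne.symm hx])]
  simp

lemma gmul_Esc_left (c : k) (p q : ℕ) (A : ℕ → ℕ → k) :
    gmul (Esc c p q) A = fun i j => if i = p then c * A q j else 0 := by
  funext i j
  show (∑ᶠ l, (if i = p ∧ l = q then c else 0) * A l j) = _
  by_cases hip : i = p
  · rw [finsum_eq_single _ q (fun x hx => by simp [hx])]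
    simp [hip]
  · rw [finsum_eq_zero_of_forall_eq_zero (fun x => by simp [hip])]
    simp [hip]

lemma gmul_Esc_right (c : k) (p q : ℕ) (A : ℕ → ℕ → k) :
    gmul A (Esc c p q) = fun i j => if j = q then A i p * c else 0 := by
  funext i j
  show (∑ᶠ l, A i l * (if l = p ∧ j = q then c else 0)) = _
  by_cases hjq : j = q
  · rw [finsum_eq_single _ p (fun x hx => by simp [hx])]
    simp [hjq]
  · rw [finsum_eq_zero_of_forall_eq_zero (fun x => by simp [hjq])]
    simp [hjq]

lemma exists_ne_zero_of_finsum_ne_zero {f : ℕ → k} (h : ∑ᶠ l, f l ≠ 0) : ∃ l, f l ≠ 0 := by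
  by_contra hc
  push_neg at hc
  exact h (finsum_eq_zero_of_forall_eq_zero hc)


lemma row_finite {A : ℕ → ℕ → k} (h : InGamma A) (i : ℕ) : {j | A i j ≠ 0}.Finite :=
  (h.1.choose_spec.1 i).1

lemma col_finite {A : ℕ → ℕ → k} (h : InGamma A) (j : ℕ) : {i | A i j ≠ 0}.Finite :=
  (h.1.choose_spec.2 j).1

lemma minf_subset_gamma : MinfSet k ⊆ GammaSet k := by
  intro A hA
  have hA : {p : ℕ × ℕ | A p.1 p.2 ≠ 0}.Finite := hA
  constructor
  · refine ⟨{p : ℕ × ℕ | A p.1 p.2 ≠ 0}.ncard, fun i => ?_, fun j => ?_⟩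
    · have hsub : ∀ a ∈ {j | A i j ≠ 0}, (i, a) ∈ {p : ℕ × ℕ | A p.1 p.2 ≠ 0} := by
        intro a ha; exact ha
      have hinj : Set.InjOn (fun a => ((i, a) : ℕ × ℕ)) {j | A i j ≠ 0} :=
        fun a _ b _ hab => by simpa using congrArg Prod.snd hab
      have hfin : {j | A i j ≠ 0}.Finite := by
        refine Set.Finite.of_finite_image (f := fun a => ((i, a) : ℕ × ℕ)) ?_ hinj
        exact hA.subset (by rintro x ⟨a, ha, rfl⟩; exact ha)
      exact ⟨hfin, Set.ncard_le_ncard_of_injOn _ hsub hinj hA⟩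
    · have hsub : ∀ a ∈ {i | A a j ≠ 0}, (a, j) ∈ {p : ℕ × ℕ | A p.1 p.2 ≠ 0} := by
        intro a ha; exact ha
      have hinj : Set.InjOn (fun a => ((a, j) : ℕ × ℕ)) {i | A i j ≠ 0} :=
        fun a _ b _ hab => by simpa using congrArg Prod.fst hab
      have hfin : {i | A i j ≠ 0}.Finite := by
        refine Set.Finite.of_finite_image (f := fun a => ((a, j) : ℕ × ℕ)) ?_ hinj
        exact hA.subset (by rintro x ⟨a, ha, rfl⟩; exact ha)
      exact ⟨hfin, Set.ncard_le_ncard_of_injOn _ hsub hinj hA⟩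
  · refine Set.Finite.subset ((hA.image (fun p => A p.1 p.2)).insert 0)
      (range_entries_subset A _ ?_)
    intro i j
    by_cases h : A i j = 0
    · rw [h]; exact Set.mem_insert _ _
    · exact Set.mem_insert_iff.2 (Or.inr ⟨(i,j), h, rfl⟩)

lemma minf_zero : (0 : ℕ → ℕ → k) ∈ MinfSet k := by
  show Set.Finite _
  convert Set.finite_empty
  ext p; simp [Pi.zero_apply]

lemma minf_add {A B : ℕ → ℕ → k} (hA : A ∈ MinfSet k) (hB : B ∈ MinfSet k) :
    A + B ∈ MinfSet k := by
  refine Set.Finite.subset (Set.Finite.union hA hB) ?_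
  intro p hp
  by_contra hc
  simp only [Set.mem_union, Set.mem_setOf_eq, not_or, not_not] at hc
  exact hp (by show A p.1 p.2 + B p.1 p.2 = 0; rw [hc.1, hc.2, add_zero])

lemma minf_neg {A : ℕ → ℕ → k} (hA : A ∈ MinfSet k) : -A ∈ MinfSet k := by
  refine Set.Finite.subset hA ?_
  intro p hp
  simp only [Set.mem_setOf_eq, Pi.neg_apply, ne_eq, neg_eq_zero] at hp
  exact hp

lemma minf_gmul_left {A B : ℕ → ℕ → k} (hA : InGamma A) (hB : B ∈ MinfSet k) :
    gmul A B ∈ MinfSet k := by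
  have hBf : {p : ℕ × ℕ | B p.1 p.2 ≠ 0}.Finite := hB
  refine Set.Finite.subset (Set.Finite.biUnion hBf
    (fun q _ => ((col_finite hA q.1).image (fun i => (i, q.2))))) ?_
  intro p hp
  have hp' : gmul A B p.1 p.2 ≠ 0 := hp
  obtain ⟨l, hl⟩ := exists_ne_zero_of_finsum_ne_zero hp'
  have h1 : A p.1 l ≠ 0 := fun h => hl (by rw [h, zero_mul])
  have h2 : B l p.2 ≠ 0 := fun h => hl (by rw [h, mul_zero])
  exact Set.mem_biUnion (show ((l, p.2) : ℕ × ℕ) ∈ _ from h2) ⟨p.1, h1, rfl⟩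

lemma minf_gmul_right {A B : ℕ → ℕ → k} (hA : InGamma A) (hB : B ∈ MinfSet k) :
    gmul B A ∈ MinfSet k := by
  have hBf : {p : ℕ × ℕ | B p.1 p.2 ≠ 0}.Finite := hB
  refine Set.Finite.subset (Set.Finite.biUnion hBf
    (fun q _ => ((row_finite hA q.2).image (fun j => (q.1, j))))) ?_
  intro p hp
  have hp' : gmul B A p.1 p.2 ≠ 0 := hp
  obtain ⟨l, hl⟩ := exists_ne_zero_of_finsum_ne_zero hp'
  have h1 : B p.1 l ≠ 0 := fun h => hl (by rw [h, zero_mul])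
  have h2 : A l p.2 ≠ 0 := fun h => hl (by rw [h, mul_zero])
  exact Set.mem_biUnion (show ((p.1, l) : ℕ × ℕ) ∈ _ from h1) ⟨p.2, h2, rfl⟩

lemma exists_seq {α : Type*} (G : List α → Set α) (hG : ∀ l, (G l).Nonempty) :
    ∃ f : ℕ → α, ∀ n, f n ∈ G (((List.range n).map f).reverse) := by
  classical
  choose g hg using hG
  let h : ℕ → List α := fun n => Nat.rec [] (fun _ ih => g ih :: ih) n
  refine ⟨fun n => g (h n), fun n => ?_⟩
  have key : ∀ n, (((List.range n).map (fun n => g (h n))).reverse) = h n := by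
    intro n
    induction n with
    | zero => simp [h]
    | succ m ih =>
      rw [List.range_succ, List.map_append, List.reverse_append]
      show _ = g (h m) :: h m
      simp [ih]
  rw [key]
  exact hg _

def Good (A : ℕ → ℕ → k) (l : List (ℕ × ℕ)) : Set (ℕ × ℕ) :=
  {p | A p.1 p.2 ≠ 0 ∧ ∀ q ∈ l, p.1 ≠ q.1 ∧ p.2 ≠ q.2 ∧ A q.1 p.2 = 0 ∧ A p.1 q.2 = 0}

lemma good_nonempty (A : ℕ → ℕ → k) (hA : InGamma A)
    (hinf : {p : ℕ × ℕ | A p.1 p.2 ≠ 0}.Infinite) (l : List (ℕ × ℕ)) :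
    (Good A l).Nonempty := by
  classical
  set S := {p : ℕ × ℕ | A p.1 p.2 ≠ 0} with hS
  -- the set of "bad" pairs relative to one q
  have hbad : ∀ q : ℕ × ℕ,
      (S ∩ {p | p.1 = q.1 ∨ p.2 = q.2 ∨ A q.1 p.2 ≠ 0 ∨ A p.1 q.2 ≠ 0}).Finite := by
    intro q
    have h1 : (S ∩ {p | p.1 = q.1}).Finite := by
      refine Set.Finite.subset ((row_finite hA q.1).image (fun j => (q.1, j))) ?_
      rintro ⟨a, b⟩ ⟨hS', h⟩
      simp only [Set.mem_setOf_eq] at h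
      subst h
      exact ⟨b, hS', rfl⟩
    have h2 : (S ∩ {p | p.2 = q.2}).Finite := by
      refine Set.Finite.subset ((col_finite hA q.2).image (fun i => (i, q.2))) ?_
      rintro ⟨a, b⟩ ⟨hS', h⟩
      simp only [Set.mem_setOf_eq] at h
      subst h
      exact ⟨a, hS', rfl⟩
    have h3 : (S ∩ {p | A q.1 p.2 ≠ 0}).Finite := by
      refine Set.Finite.subset (Set.Finite.biUnion (row_finite hA q.1)
        (fun j _ => (col_finite hA j).image (fun i => (i, j)))) ?_
      rintro ⟨a, b⟩ ⟨hS', h⟩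
      exact Set.mem_biUnion (show b ∈ {j | A q.1 j ≠ 0} from h) ⟨a, hS', rfl⟩
    have h4 : (S ∩ {p | A p.1 q.2 ≠ 0}).Finite := by
      refine Set.Finite.subset (Set.Finite.biUnion (col_finite hA q.2)
        (fun i _ => (row_finite hA i).image (fun j => (i, j)))) ?_
      rintro ⟨a, b⟩ ⟨hS', h⟩
      exact Set.mem_biUnion (show a ∈ {i | A i q.2 ≠ 0} from h) ⟨b, hS', rfl⟩
    refine Set.Finite.subset (((h1.union h2).union h3).union h4) ?_
    rintro p ⟨hpS, hp⟩
    rcases hp with h|h|h|h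
    · exact Or.inl (Or.inl (Or.inl ⟨hpS, h⟩))
    · exact Or.inl (Or.inl (Or.inr ⟨hpS, h⟩))
    · exact Or.inl (Or.inr ⟨hpS, h⟩)
    · exact Or.inr ⟨hpS, h⟩
  have hbig : (S \ ⋃ q ∈ {q | q ∈ l}, S ∩ {p | p.1 = q.1 ∨ p.2 = q.2 ∨ A q.1 p.2 ≠ 0 ∨ A p.1 q.2 ≠ 0}).Infinite :=
    hinf.diff (Set.Finite.biUnion l.finite_toSet (fun q _ => hbad q))
  obtain ⟨p, hpS, hp⟩ := hbig.nonempty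
  refine ⟨p, hpS, fun q hq => ?_⟩
  have : p ∉ S ∩ {p | p.1 = q.1 ∨ p.2 = q.2 ∨ A q.1 p.2 ≠ 0 ∨ A p.1 q.2 ≠ 0} := by
    intro hmem
    exact hp (Set.mem_biUnion (show q ∈ {q | q ∈ l} from hq) hmem)
  simp only [Set.mem_inter_iff, Set.mem_setOf_eq, not_and, not_or, not_not] at this
  obtain ⟨h1, h2, h3, h4⟩ := this hpS
  exact ⟨h1, h2, h3, h4⟩

/-- Extraction: from a Γ-matrix with infinite support, extract injections σ, τ
with `A (σ n) (τ n) ≠ 0` and `A (σ m) (τ n) = 0` for `m ≠ n`. -/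
lemma extract (A : ℕ → ℕ → k) (hA : InGamma A)
    (hinf : {p : ℕ × ℕ | A p.1 p.2 ≠ 0}.Infinite) :
    ∃ σ τ : ℕ → ℕ, Function.Injective σ ∧ Function.Injective τ ∧
      (∀ n, A (σ n) (τ n) ≠ 0) ∧ (∀ m n, m ≠ n → A (σ m) (τ n) = 0) := by
  obtain ⟨f, hf⟩ := exists_seq (Good A) (good_nonempty A hA hinf)
  have hmem : ∀ m n, m < n → f m ∈ ((List.range n).map f).reverse := by
    intro m n h
    rw [List.mem_reverse]
    exact List.mem_map.2 ⟨m, List.mem_range.2 h, rfl⟩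
  have key : ∀ m n, m < n →
      (f n).1 ≠ (f m).1 ∧ (f n).2 ≠ (f m).2 ∧ A (f m).1 (f n).2 = 0 ∧ A (f n).1 (f m).2 = 0 :=
    fun m n h => (hf n).2 (f m) (hmem m n h)
  refine ⟨fun n => (f n).1, fun n => (f n).2, ?_, ?_, fun n => (hf n).1, ?_⟩
  · intro a b hab
    by_contra hne
    rcases Nat.lt_or_ge a b with h|h
    · exact (key a b h).1 hab.symm
    · exact (key b a (lt_of_le_of_ne h (Ne.symm hne))).1 hab
  · intro a b hab
    by_contra hne
    rcases Nat.lt_or_ge a b with h|h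
    · exact (key a b h).2.1 hab.symm
    · exact (key b a (lt_of_le_of_ne h (Ne.symm hne))).2.1 hab
  · intro m n hmn
    rcases Nat.lt_or_ge m n with h|h
    · exact (key m n h).2.2.1
    · exact (key n m (lt_of_le_of_ne h (Ne.symm hmn))).2.2.2

end S9

/-- over a field `k`, `M_∞(k)` is the only proper nonzero
two-sided ideal of Karoubi's cone `Γ(k)`. -/
theorem stmt9 (k : Type*) [Field k] :
    IsTwoSidedIdealOfGamma k (MinfSet k) ∧
    MinfSet k ≠ GammaSet k ∧ (∃ A ∈ MinfSet k, A ≠ 0) ∧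
    ∀ I : Set (ℕ → ℕ → k), IsTwoSidedIdealOfGamma k I →
      (∃ A ∈ I, A ≠ 0) → I ≠ GammaSet k → I = MinfSet k := by
  classical
  constructor
  · exact ⟨S9.minf_subset_gamma, S9.minf_zero, fun A B hA hB => S9.minf_add hA hB,
      fun A hA => S9.minf_neg hA,
      fun A B hA hB => ⟨S9.minf_gmul_left hA hB, S9.minf_gmul_right hA hB⟩⟩
  refine ⟨?_, ?_, ?_⟩
  · -- MinfSet ≠ GammaSet : the identity matrix
    intro h
    have h1 : (fun i j => if i = j then (1:k) else 0) ∈ GammaSet k :=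
      S9.inGamma_diag (fun _ => (1:k))
        ((Set.finite_singleton 1).subset (by rintro x ⟨n, rfl⟩; rfl))
    rw [← h] at h1
    have h2 : {p : ℕ × ℕ | (fun i j => if i = j then (1:k) else 0) p.1 p.2 ≠ 0}.Finite := h1
    have h3 : {p : ℕ × ℕ | (fun i j => if i = j then (1:k) else 0) p.1 p.2 ≠ 0}.Infinite := by
      refine Set.infinite_of_injective_forall_mem (f := fun n : ℕ => ((n, n) : ℕ × ℕ)) ?_ ?_
      · intro a b hab; simpa using congrArg Prod.fst hab
      · intro n; simp
    exact h3 h2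
  · -- a nonzero element of MinfSet
    refine ⟨S9.Esc (1:k) 0 0, ?_, ?_⟩
    · show Set.Finite _
      refine Set.Finite.subset (Set.finite_singleton ((0,0) : ℕ × ℕ)) ?_
      rintro ⟨a, b⟩ hp
      simp only [S9.Esc, Set.mem_setOf_eq, ne_eq, ite_eq_right_iff, Classical.not_imp] at hp
      simp [hp.1.1, hp.1.2]
    · intro h
      have := congrFun (congrFun h 0) 0
      simp [S9.Esc] at this
  · -- uniqueness
    intro I hI hex hne
    obtain ⟨hIsub, hI0, hIadd, hIneg, hIcl⟩ := hI
    obtain ⟨A0, hA0I, hA0ne⟩ := hex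
    -- A0 has a nonzero entry
    have hp0 : ∃ p : ℕ × ℕ, A0 p.1 p.2 ≠ 0 := by
      by_contra h
      push_neg at h
      exact hA0ne (funext fun i => funext fun j => h (i, j))
    obtain ⟨⟨i0, j0⟩, hc0⟩ := hp0
    have hc0 : A0 i0 j0 ≠ 0 := hc0
    -- every scalar matrix unit lies in I
    have hEsc : ∀ (c : k) (p q : ℕ), S9.Esc c p q ∈ I := by
      intro c p q
      have h1 : gmul (S9.Esc (c * (A0 i0 j0)⁻¹) p i0) A0 ∈ I :=
        (hIcl _ _ (S9.inGamma_Esc _ _ _) hA0I).1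
      have h2 : gmul (gmul (S9.Esc (c * (A0 i0 j0)⁻¹) p i0) A0) (S9.Esc 1 j0 q) ∈ I :=
        (hIcl _ _ (S9.inGamma_Esc (1:k) j0 q) h1).2
      have heq : gmul (gmul (S9.Esc (c * (A0 i0 j0)⁻¹) p i0) A0) (S9.Esc 1 j0 q)
          = S9.Esc c p q := by
        rw [S9.gmul_Esc_left, S9.gmul_Esc_right]
        funext i j
        simp only [S9.Esc]
        by_cases h1' : i = p <;> by_cases h2' : j = q <;>
          simp [h1', h2', mul_one, inv_mul_cancel_right₀ hc0]
      rwa [heq] at h2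
    -- MinfSet ⊆ I
    have hMsub : MinfSet k ⊆ I := by
      intro B hB
      have hBf : {p : ℕ × ℕ | B p.1 p.2 ≠ 0}.Finite := hB
      have hBeq : B = ∑ p ∈ hBf.toFinset, S9.Esc (B p.1 p.2) p.1 p.2 := by
        funext i j
        rw [Finset.sum_apply, Finset.sum_apply]
        rw [Finset.sum_congr rfl (fun p _ => show S9.Esc (B p.1 p.2) p.1 p.2 i j
          = if ((i, j) : ℕ × ℕ) = p then B i j else 0 by
            by_cases h : ((i, j) : ℕ × ℕ) = p
            · subst h; simp [S9.Esc]
            · have h' : ¬(i = p.1 ∧ j = p.2) := by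
                intro ⟨ha, hb⟩; exact h (Prod.ext ha.symm hb.symm).symm
              simp [S9.Esc, h', h])]
        rw [Finset.sum_ite_eq]
        by_cases hmem : ((i, j) : ℕ × ℕ) ∈ hBf.toFinset
        · simp [hmem]
        · have : B i j = 0 := by
            by_contra hne'
            exact hmem (hBf.mem_toFinset.2 hne')
          simp [hmem, this]
      rw [hBeq]
      exact Finset.sum_induction _ (· ∈ I) hIadd hI0 (fun p _ => hEsc _ _ _)
    -- I ⊆ MinfSet
    have hIM : I ⊆ MinfSet k := by
      intro B hBI
      by_contra hBM
      have hBΓ : InGamma B := hIsub hBI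
      have hinf : {p : ℕ × ℕ | B p.1 p.2 ≠ 0}.Infinite := hBM
      obtain ⟨σ, τ, hσ, hτ, hdiag, hcross⟩ := S9.extract B hBΓ hinf
      set P : ℕ → ℕ → k := fun n m => if m = σ n then 1 else 0 with hP
      set Q : ℕ → ℕ → k := fun m n => if m = τ n then 1 else 0 with hQ
      have hPB : gmul P B ∈ I := (hIcl P B (S9.inGamma_sel_left σ hσ) hBI).1
      have hDI : gmul (gmul P B) Q ∈ I := (hIcl Q (gmul P B) (S9.inGamma_sel_right τ hτ) hPB).2
      have hDeq : gmul (gmul P B) Q = fun m n => if m = n then B (σ m) (τ m) else 0 := by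
        rw [hP, S9.gmul_sel_left, hQ, S9.gmul_sel_right]
        funext m n
        by_cases h : m = n
        · subst h; simp
        · simp [h, hcross m n h]
      set d : ℕ → k := fun n => B (σ n) (τ n) with hd
      have hdne : ∀ n, d n ≠ 0 := hdiag
      set Dinv : ℕ → ℕ → k := fun i j => if i = j then (d i)⁻¹ else 0 with hDinv
      have hDinvΓ : InGamma Dinv := by
        refine S9.inGamma_diag _ ?_
        refine Set.Finite.subset (hBΓ.2.image Inv.inv) ?_
        rintro x ⟨n, rfl⟩
        exact ⟨B (σ n) (τ n), ⟨(σ n, τ n), rfl⟩, rfl⟩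
      have honeI : (fun i j => if i = j then (1:k) else 0) ∈ I := by
        have h1 : gmul Dinv (gmul (gmul P B) Q) ∈ I := (hIcl Dinv _ hDinvΓ hDI).1
        have h2 : gmul Dinv (gmul (gmul P B) Q) = fun i j => if i = j then (1:k) else 0 := by
          rw [hDeq, hDinv, S9.gmul_diag_left]
          funext i j
          by_cases h : i = j
          · subst h; simp [inv_mul_cancel₀ (hdne i)]; exact inv_mul_cancel₀ (hdne i)
          · simp [h]
        rwa [h2] at h1
      have hGsub : GammaSet k ⊆ I := by
        intro C hC
        have := (hIcl C _ hC honeI).1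
        rwa [S9.gmul_one_right] at this
      exact hne (Set.Subset.antisymm hIsub hGsub)
    exact Set.Subset.antisymm hIM hMsub
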